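/- For every t ∈ (0,1) there exists Θ > 0 such that H_t(w) ≥ |Real.log t|/2 for every w ∈ ℂ with Real.log t ≤ Re w ≤ 0 and Im w ≥ Θ. (This is the statement that for fixed t, H_t(z) ≥ |log t|/2 as arg z → ∞, uniformly for t ≤ |z| ≤ 1.) -/

import Mathlib

noncomputable section

open Complex

/-- The barrier function `H_t(w) = Im((log t)·w / ((log t) + I·w))`. -/
def Ht (t : ℝ) (w : ℂ) : ℝ :=
  (((Real.log t : ℂ) * w) / ((Real.log t : ℂ) + Complex.I * w)).im

/-- For fixed `t ∈ (0,1)`, we have `H_t(w) ≥ |log t|/2` as `Im w → ∞`, uniformly for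
`log t ≤ Re w ≤ 0`. -/
theorem Ht_ge_for_large_arg (t : ℝ) (ht : t ∈ Set.Ioo (0 : ℝ) 1) :
    ∃ Θ : ℝ, 0 < Θ ∧ ∀ w : ℂ, Real.log t ≤ w.re → w.re ≤ 0 → Θ ≤ w.im →
      |Real.log t| / 2 ≤ Ht t w := by
  have hL : Real.log t < 0 := Real.log_neg ht.1 ht.2
  set L := Real.log t with hLdef
  refine ⟨-L, by linarith, fun w hx1 hx2 hy => ?_⟩
  set x := w.re
  set y := w.im
  have hy0 : -L ≤ y := hy
  have habs : |L| = -L := abs_of_neg hL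
  have hD : 0 < (L - y) ^ 2 + x ^ 2 := by nlinarith
  have hval : Ht t w = (L * y * (L - y) - L * x * x) / ((L - y) ^ 2 + x ^ 2) := by
    simp only [Ht, Complex.div_im, Complex.mul_im, Complex.mul_re, Complex.add_re,
      Complex.add_im, Complex.I_re, Complex.I_im, Complex.ofReal_re, Complex.ofReal_im,
      Complex.normSq_apply]
    ring_nf
    rfl
  rw [hval, habs, le_div_iff₀ hD]
  nlinarith [mul_nonneg (neg_nonneg.2 hL.le) (sq_nonneg x),
    mul_nonneg (mul_nonneg (neg_nonneg.2 hL.le) (by linarith : (0:ℝ) ≤ L + y)) (by linarith : (0:ℝ) ≤ y - L)]
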